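/- Fix k ≥ 1 and 0 ≤ i ≤ k. Define the weighted shift map E_i: A → A on A = ℂ[x₁, x₂, …] by E_i(a) = (1/i!)·τ(a)·x₁^{i}, where τ is the index-shift map. Then E_i maps the ideal I_{k,i} = Σ_{t≥k+1} A·R⁰_{k,t} + A·x₁^{k-i+1} into the ideal I_{k,k-i} = Σ_{t≥k+1} A·R⁰_{k,t} + A·x₁^{i+1}. -/

import Mathlib

open MvPolynomial

noncomputable section

abbrev A : Type := MvPolynomial ℕ+ ℂ

/-- weight function: `x_m` has weight `m`. -/
def wtA : ℕ+ → ℕ := fun m => (m : ℕ)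

/-- the index-shift map `τ : x_m ↦ x_{m+1}` (multiplicative on monomials). -/
def tau : A →ₐ[ℂ] A := rename (fun m => m + 1)

/-- `B = ℂ[x₂, x₃, …]`, the subalgebra generated by the variables `x_m`, `m ≥ 2`. -/
def BB : Subalgebra ℂ A := Algebra.adjoin ℂ {p : A | ∃ m : ℕ+, 2 ≤ m ∧ p = X m}

/-- `R⁰_{k,t}`: sum over ordered `(k+1)`-tuples of integers `≥ 1` summing to `t`. -/
def R0 (k t : ℕ) : A :=
  ∑ m ∈ (Finset.Nat.antidiagonalTuple (k+1) t).filter (fun m => ∀ i, 1 ≤ m i),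
    ∏ i, X ((m i).toPNat')

/-- `R¹_{k,t}`: sum over ordered `(k+1)`-tuples of integers `≥ 2` summing to `t`. -/
def R1 (k t : ℕ) : A :=
  ∑ m ∈ (Finset.Nat.antidiagonalTuple (k+1) t).filter (fun m => ∀ i, 2 ≤ m i),
    ∏ i, X ((m i).toPNat')

/-- the projection `ρ : A → B` along `A·x₁` (set `x₁ = 0`). -/
def rho : A →ₐ[ℂ] A := aeval (fun m : ℕ+ => if m = 1 then 0 else X m)

/-- `I_{k,0} = Σ_{t ≥ k+1} A·R⁰_{k,t}`. -/
def Ik0 (k : ℕ) : Ideal A := Ideal.span {p : A | ∃ t, k + 1 ≤ t ∧ p = R0 k t}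

/-- `I_{k,i} = Σ_{t ≥ k+1} A·R⁰_{k,t} + A·x₁^{k-i+1}`. -/
def Ik (k i : ℕ) : Ideal A := Ik0 k ⊔ Ideal.span {X 1 ^ (k - i + 1)}

/-- `I'_{k,k} = Σ_{t ≥ 2(k+1)} B·R¹_{k,t}` as a ℂ-subspace of `A`. -/
def Ipkk (k : ℕ) : Submodule ℂ A :=
  Submodule.span ℂ {p : A | ∃ t, 2*(k+1) ≤ t ∧ ∃ b ∈ BB, p = b * R1 k t}

end

namespace Stmt12Aux

open Finset

/-- ℂ-scalar multiples stay in an ideal of `A`. -/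
lemma smulC_mem {I : Ideal A} (c : ℂ) {p : A} (h : p ∈ I) : c • p ∈ I := by
  rw [MvPolynomial.smul_eq_C_mul]; exact I.mul_mem_left _ h

lemma toPNat'_one : (1 : ℕ).toPNat' = 1 := rfl

lemma toPNat'_two : (2 : ℕ).toPNat' = 2 := rfl

/-- `τ` sends `R⁰_{k,t}` to `R¹_{k,t+k+1}`. -/
lemma tau_R0 (k t : ℕ) : tau (R0 k t) = R1 k (t + (k+1)) := by
  unfold R0 R1
  rw [map_sum]
  refine Finset.sum_nbij' (fun m j => m j + 1) (fun m j => m j - 1) ?_ ?_ ?_ ?_ ?_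
  · intro m hm
    simp only [Finset.mem_filter, Finset.Nat.mem_antidiagonalTuple] at hm ⊢
    refine ⟨?_, fun j => by have := hm.2 j; omega⟩
    rw [Finset.sum_add_distrib, hm.1]
    simp
  · intro m hm
    simp only [Finset.mem_filter, Finset.Nat.mem_antidiagonalTuple] at hm ⊢
    have h2 := hm.2
    constructor
    · have : ∑ j, (m j - 1) + ∑ j : Fin (k+1), 1 = ∑ j, m j := by
        rw [← Finset.sum_add_distrib]
        exact Finset.sum_congr rfl fun j _ => by have := h2 j; omega
      simp only [Finset.sum_const, Finset.card_univ, Fintype.card_fin, smul_eq_mul,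
        mul_one] at this
      omega
    · intro j; have := h2 j; omega
  · intro m hm; funext j; show m j + 1 - 1 = m j; omega
  · intro m hm
    simp only [Finset.mem_filter] at hm
    funext j; have := hm.2 j; show m j - 1 + 1 = m j; omega
  · intro m hm
    simp only [Finset.mem_filter] at hm
    rw [map_prod]
    refine Finset.prod_congr rfl fun j _ => ?_
    show (rename (fun m : ℕ+ => m + 1)) (X (m j).toPNat') = X ((m j + 1).toPNat')
    rw [rename_X]
    congr 1
    have h1 := hm.2 j
    apply PNat.coe_injective
    simp only [PNat.add_coe, PNat.one_coe]
    rw [PNat.toPNat'_coe (by omega : 0 < m j), PNat.toPNat'_coe (by omega : 0 < m j + 1)]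

/-- `R⁰ - R¹` is a multiple of `x₁`. -/
lemma R0_sub_R1_mem (k s : ℕ) : R0 k s - R1 k s ∈ Ideal.span {(X 1 : A)} := by
  unfold R0 R1
  have hsub : (Finset.Nat.antidiagonalTuple (k+1) s).filter (fun m => ∀ i, 2 ≤ m i) ⊆
      (Finset.Nat.antidiagonalTuple (k+1) s).filter (fun m => ∀ i, 1 ≤ m i) := by
    intro m hm
    simp only [Finset.mem_filter] at hm ⊢
    exact ⟨hm.1, fun j => by have := hm.2 j; omega⟩
  rw [← Finset.sum_sdiff hsub, add_sub_cancel_right]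
  refine Ideal.sum_mem _ fun m hm => Ideal.mem_span_singleton.mpr ?_
  simp only [Finset.mem_sdiff, Finset.mem_filter, not_and, not_forall] at hm
  obtain ⟨⟨hmem, h1⟩, h2⟩ := hm
  obtain ⟨j, hj⟩ := h2 hmem
  have hj1 : m j = 1 := by have := h1 j; omega
  have : (X ((m j).toPNat') : A) = X 1 := by rw [hj1]; rfl
  rw [← this]
  exact Finset.dvd_prod_of_mem _ (Finset.mem_univ j)

/-- The key combinatorial fact: `x₁^i x₂^{k-i+1} ∈ I_{k,k-i}`. -/
lemma key (k i : ℕ) (hi : i ≤ k) :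
    (X 1 ^ i * X 2 ^ (k - i + 1) : A) ∈ Ik k (k - i) := by
  set t := 2*k - i + 2 with ht
  set F := (Finset.Nat.antidiagonalTuple (k+1) t).filter (fun m => ∀ j, 1 ≤ m j) with hF
  set P : (Fin (k+1) → ℕ) → Prop := fun m => ∀ j, m j ≤ 2 with hP
  -- every tuple in F satisfying P gives the monomial x₁^i x₂^{k-i+1}
  have claim1 : ∀ m ∈ F.filter P, (∏ j, X ((m j).toPNat') : A)
      = X 1 ^ i * X 2 ^ (k - i + 1) := by
    intro m hm
    simp only [hF, hP, Finset.mem_filter, Finset.Nat.mem_antidiagonalTuple] at hm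
    obtain ⟨⟨hsum, h1⟩, h2⟩ := hm
    have hcard : (Finset.univ.filter (fun j => m j = 1)).card = i ∧
        (Finset.univ.filter (fun j => ¬ m j = 1)).card = k - i + 1 := by
      have hsplit := Finset.sum_filter_add_sum_filter_not Finset.univ
        (fun j => m j = 1) m
      have e1 : ∑ j ∈ Finset.univ.filter (fun j => m j = 1), m j
          = (Finset.univ.filter (fun j => m j = 1)).card := by
        rw [Finset.sum_congr rfl (fun j hj => (Finset.mem_filter.mp hj).2)]
        simp
      have e2 : ∑ j ∈ Finset.univ.filter (fun j => ¬ m j = 1), m j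
          = 2 * (Finset.univ.filter (fun j => ¬ m j = 1)).card := by
        have hval : ∀ j ∈ Finset.univ.filter (fun j => ¬ m j = 1), m j = 2 := by
          intro j hj
          have := (Finset.mem_filter.mp hj).2
          have := h1 j; have := h2 j; omega
        rw [Finset.sum_congr rfl hval, Finset.sum_const, smul_eq_mul, mul_comm]
      have ecard : (Finset.univ.filter (fun j => m j = 1)).card
          + (Finset.univ.filter (fun j => ¬ m j = 1)).card = k + 1 := by
        have := Finset.card_filter_add_card_filter_not
          (s := (Finset.univ : Finset (Fin (k+1)))) (p := fun j => m j = 1)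
        simpa using this
      rw [e1, e2, hsum] at hsplit
      omega
    rw [← Finset.prod_filter_mul_prod_filter_not Finset.univ (fun j => m j = 1)]
    congr 1
    · rw [Finset.prod_congr rfl (fun j hj => ?_), Finset.prod_const, hcard.1]
      have := (Finset.mem_filter.mp hj).2
      rw [this]; rfl
    · rw [Finset.prod_congr rfl (fun j hj => ?_), Finset.prod_const, hcard.2]
      have h1j := h1 j; have h2j := h2 j
      have := (Finset.mem_filter.mp hj).2
      have : m j = 2 := by omega
      rw [this]; rfl
  -- every tuple in F not satisfying P gives a multiple of x₁^{i+1}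
  have claim2 : ∀ m ∈ F.filter (fun m => ¬ P m),
      (X 1 : A) ^ (i+1) ∣ ∏ j, X ((m j).toPNat') := by
    intro m hm
    simp only [hF, hP, Finset.mem_filter, Finset.Nat.mem_antidiagonalTuple,
      not_forall] at hm
    obtain ⟨⟨hsum, h1⟩, j0, hj0⟩ := hm
    have hj0S : j0 ∈ Finset.univ.filter (fun j => ¬ m j = 1) := by
      simp only [Finset.mem_filter, Finset.mem_univ, true_and]; omega
    have herase := Finset.add_sum_erase (Finset.univ.filter (fun j => ¬ m j = 1)) m hj0S
    have hler : 2 * ((Finset.univ.filter (fun j => ¬ m j = 1)).card - 1)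
        ≤ ∑ x ∈ (Finset.univ.filter (fun j => ¬ m j = 1)).erase j0, m x := by
      have := Finset.card_nsmul_le_sum
        ((Finset.univ.filter (fun j => ¬ m j = 1)).erase j0) m 2
        (fun j hj => by
          have hmem := Finset.mem_of_mem_erase hj
          simp only [Finset.mem_filter] at hmem
          have := h1 j; omega)
      rw [Finset.card_erase_of_mem hj0S] at this
      simpa [mul_comm] using this
    have e1 : ∑ j ∈ Finset.univ.filter (fun j => m j = 1), m j
        = (Finset.univ.filter (fun j => m j = 1)).card := by
      rw [Finset.sum_congr rfl (fun j hj => (Finset.mem_filter.mp hj).2)]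
      simp
    have ecard : (Finset.univ.filter (fun j => m j = 1)).card
        + (Finset.univ.filter (fun j => ¬ m j = 1)).card = k + 1 := by
      have := Finset.card_filter_add_card_filter_not
        (s := (Finset.univ : Finset (Fin (k+1)))) (p := fun j => m j = 1)
      simpa using this
    have hsplit := Finset.sum_filter_add_sum_filter_not Finset.univ
      (fun j => m j = 1) m
    rw [e1, hsum] at hsplit
    have hScard : i + 1 ≤ (Finset.univ.filter (fun j => m j = 1)).card := by omega
    have hdvd1 : (X 1 : A) ^ (Finset.univ.filter (fun j => m j = 1)).card
        ∣ ∏ j, X ((m j).toPNat') := by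
      have heq : (X 1 : A) ^ (Finset.univ.filter (fun j => m j = 1)).card
          = ∏ j ∈ Finset.univ.filter (fun j => m j = 1), X ((m j).toPNat') := by
        have hval : ∀ j ∈ Finset.univ.filter (fun j => m j = 1),
            (X ((m j).toPNat') : A) = X 1 := by
          intro j hj
          have := (Finset.mem_filter.mp hj).2
          rw [this]; rfl
        rw [Finset.prod_congr rfl hval, Finset.prod_const]
      rw [heq]
      exact Finset.prod_dvd_prod_of_subset _ Finset.univ _ (Finset.subset_univ _)
    exact dvd_trans (pow_dvd_pow _ hScard) hdvd1
  -- the good set is nonempty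
  have hne : (fun j : Fin (k+1) => if (j : ℕ) < i then 1 else 2) ∈ F.filter P := by
    simp only [hF, hP, Finset.mem_filter, Finset.Nat.mem_antidiagonalTuple]
    refine ⟨⟨?_, fun j => by split <;> omega⟩, fun j => by split <;> omega⟩
    rw [Fin.sum_univ_eq_sum_range (fun j => if j < i then 1 else 2) (k+1)]
    rw [Finset.sum_ite, Finset.sum_const, Finset.sum_const]
    have hfilt : (Finset.range (k+1)).filter (fun j => j < i) = Finset.range i := by
      ext j
      simp only [Finset.mem_filter, Finset.mem_range]
      omega
    have ecard : ((Finset.range (k+1)).filter (fun j => j < i)).card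
        + ((Finset.range (k+1)).filter (fun j => ¬ j < i)).card = k + 1 := by
      have := Finset.card_filter_add_card_filter_not
        (s := Finset.range (k+1)) (p := fun j => j < i)
      simpa using this
    rw [hfilt] at ecard
    rw [hfilt]
    simp only [Finset.card_range, smul_eq_mul, mul_one] at ecard ⊢
    omega
  -- split R0 k t
  have hsplit : R0 k t = (F.filter P).card • (X 1 ^ i * X 2 ^ (k - i + 1) : A)
      + ∑ m ∈ F.filter (fun m => ¬ P m), ∏ j, X ((m j).toPNat') := by
    rw [R0, ← hF, ← Finset.sum_filter_add_sum_filter_not F P]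
    congr 1
    rw [Finset.sum_congr rfl claim1, Finset.sum_const]
  have hexp : k - (k - i) + 1 = i + 1 := by omega
  have hR0mem : R0 k t ∈ Ik k (k - i) := by
    apply Ideal.mem_sup_left
    exact Ideal.subset_span ⟨t, by omega, rfl⟩
  have hspan : Ideal.span {(X 1 : A) ^ (i+1)} ≤ Ik k (k - i) := by
    rw [Ik, hexp]
    exact le_sup_right
  have hrmem : ∑ m ∈ F.filter (fun m => ¬ P m), (∏ j, X ((m j).toPNat') : A)
      ∈ Ik k (k - i) := by
    apply hspan
    exact Ideal.sum_mem _ fun m hm => Ideal.mem_span_singleton.mpr (claim2 m hm)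
  have hc : ((F.filter P).card : ℂ) ≠ 0 := by
    exact_mod_cast Finset.card_ne_zero_of_mem hne
  have hmain : ((F.filter P).card : ℂ) • (X 1 ^ i * X 2 ^ (k - i + 1) : A)
      ∈ Ik k (k - i) := by
    rw [Nat.cast_smul_eq_nsmul]
    have : (F.filter P).card • (X 1 ^ i * X 2 ^ (k - i + 1) : A)
        = R0 k t - ∑ m ∈ F.filter (fun m => ¬ P m), ∏ j, X ((m j).toPNat') := by
      rw [hsplit]; ring
    rw [this]
    exact sub_mem hR0mem hrmem
  have := smulC_mem (((F.filter P).card : ℂ)⁻¹) hmain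
  rwa [smul_smul, inv_mul_cancel₀ hc, one_smul] at this

lemma tau_X1 : tau (X 1 : A) = X 2 := by
  show (rename (fun m : ℕ+ => m + 1)) (X 1) = X 2
  rw [rename_X]
  congr 1

end Stmt12Aux

/-- the weighted shift `E_i(a) = (1/i!)·τ(a)·x₁^i` maps `I_{k,i}`
into `I_{k,k-i}`. -/
theorem stmt12 (k i : ℕ) (hk : 1 ≤ k) (hi : i ≤ k) :
    ∀ a ∈ Ik k i, ((i.factorial : ℂ)⁻¹) • (tau a * X 1 ^ i) ∈ Ik k (k - i) := by
  intro a ha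
  apply Stmt12Aux.smulC_mem
  rw [Ik] at ha
  obtain ⟨b, hb, c, hc, rfl⟩ := Submodule.mem_sup.mp ha
  rw [map_add, add_mul]
  have hexp : k - (k - i) + 1 = i + 1 := by omega
  have hspan : Ideal.span {(X 1 : A) ^ (i+1)} ≤ Ik k (k - i) := by
    rw [Ik, hexp]
    exact le_sup_right
  refine add_mem ?_ ?_
  · -- b ∈ Ik0 k
    refine Submodule.span_induction ?_ ?_ ?_ ?_ hb
    · rintro p ⟨t, ht, rfl⟩
      rw [Stmt12Aux.tau_R0]
      have hR0mem : R0 k (t + (k+1)) * X 1 ^ i ∈ Ik k (k - i) := by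
        apply Ideal.mul_mem_right
        apply Ideal.mem_sup_left
        exact Ideal.subset_span ⟨t + (k+1), by omega, rfl⟩
      have hdiff : (R0 k (t + (k+1)) - R1 k (t + (k+1))) * X 1 ^ i ∈ Ik k (k - i) := by
        apply hspan
        rw [Ideal.mem_span_singleton, pow_succ']
        exact mul_dvd_mul (Ideal.mem_span_singleton.mp
          (Stmt12Aux.R0_sub_R1_mem k (t + (k+1)))) dvd_rfl
      have : R1 k (t + (k+1)) * X 1 ^ i
          = R0 k (t + (k+1)) * X 1 ^ i - (R0 k (t + (k+1)) - R1 k (t + (k+1))) * X 1 ^ i := by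
        ring
      rw [this]
      exact sub_mem hR0mem hdiff
    · simp
    · intro x y hx hy hpx hpy
      rw [map_add, add_mul]
      exact add_mem hpx hpy
    · intro q x hx hpx
      rw [smul_eq_mul, map_mul, mul_assoc]
      exact Ideal.mul_mem_left _ _ hpx
  · -- c ∈ span {X 1 ^ (k - i + 1)}
    obtain ⟨q, rfl⟩ := Ideal.mem_span_singleton.mp hc
    rw [map_mul, map_pow, Stmt12Aux.tau_X1]
    have : X 2 ^ (k - i + 1) * tau q * X 1 ^ i
        = tau q * (X 1 ^ i * X 2 ^ (k - i + 1)) := by ring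
    rw [this]
    exact Ideal.mul_mem_left _ _ (Stmt12Aux.key k i hi)
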